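/- Let k be a field, n ≥ 2, 1 ≤ e ≤ n-1, d = n-e+1. Let I = ⋂_σ I_σ where σ ranges over e-element subsets of {1,...,n} and I_σ = (x_{i_1},...,x_{i_e}). Then for every t ≥ 1, the symbolic power I^{(edt)} := ⋂_σ I_σ^{edt} is contained in I^{nt}. -/

import Mathlib

open MvPolynomial Finset

section Aux
variable {k : Type*} [Field k] {n : ℕ}

variable {k : Type*} [Field k] {n : ℕ}

/-- Polynomials all of whose monomials have σ-weighted degree ≥ m form an ideal. -/
def degIdeal (σ : Finset (Fin n)) (m : ℕ) : Ideal (MvPolynomial (Fin n) k) where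
  carrier := {f | ∀ a ∈ f.support, m ≤ ∑ i ∈ σ, a i}
  add_mem' := by
    intro f g hf hg a ha
    rcases Finset.mem_union.1 (MvPolynomial.support_add ha) with h | h
    · exact hf a h
    · exact hg a h
  zero_mem' := by simp
  smul_mem' := by
    intro r f hf a ha
    rw [smul_eq_mul] at ha
    have h2 := MvPolynomial.support_mul r f ha
    rw [Finset.mem_add] at h2
    obtain ⟨b, hb, c, hc, rfl⟩ := h2
    calc m ≤ ∑ i ∈ σ, c i := hf c hc
    _ ≤ ∑ i ∈ σ, (b + c) i := Finset.sum_le_sum (fun i _ => by simp)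

lemma mem_degIdeal {σ : Finset (Fin n)} {m : ℕ} {f : MvPolynomial (Fin n) k} :
    f ∈ degIdeal σ m ↔ ∀ a ∈ f.support, m ≤ ∑ i ∈ σ, a i := Iff.rfl

lemma pow_span_le_degIdeal (σ : Finset (Fin n)) (m : ℕ) :
    (Ideal.span (X '' (σ : Set (Fin n))) : Ideal (MvPolynomial (Fin n) k)) ^ m ≤ degIdeal σ m := by
  induction m with
  | zero => intro f _ a _; simp
  | succ m ih =>
    rw [pow_succ]
    refine Ideal.mul_le.2 (fun f hf g hg a ha => ?_)
    have h2 := MvPolynomial.support_mul f g ha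
    rw [Finset.mem_add] at h2
    obtain ⟨b, hb, c, hc, rfl⟩ := h2
    have hfb : m ≤ ∑ i ∈ σ, b i := ih hf b hb
    have hgc : 1 ≤ ∑ i ∈ σ, c i := by
      have : g ∈ degIdeal σ 1 := by
        revert hg
        refine fun hg => Ideal.span_le.2 ?_ hg
        rintro p ⟨i, hi, rfl⟩ a ha
        rw [MvPolynomial.support_X] at ha
        rw [Finset.mem_singleton] at ha
        subst ha
        rw [Finset.sum_eq_single i (fun j _ hj => Finsupp.single_eq_of_ne' (Ne.symm hj)) (fun h => absurd hi h)]
        simp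
      exact this c hc
    have : ∑ i ∈ σ, (b + c) i = (∑ i ∈ σ, b i) + ∑ i ∈ σ, c i := by
      simp [Finset.sum_add_distrib]
    omega



lemma shrink_sum (N : ℕ) : ∀ (K : ℕ) (c : Fin n → ℕ), (∑ i, c i = N + K) →
    ∃ c' : Fin n → ℕ, (∀ i, c' i ≤ c i) ∧ ∑ i, c' i = N := by
  intro K
  induction K with
  | zero => intro c hc; exact ⟨c, fun i => le_rfl, by simpa using hc⟩
  | succ K ih =>
    intro c hc
    have hpos : ∃ i, 0 < c i := by
      by_contra h
      push_neg at h
      have : ∑ i, c i = 0 := Finset.sum_eq_zero (fun i _ => Nat.le_zero.1 (h i))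
      omega
    obtain ⟨j, hj⟩ := hpos
    set c₁ : Fin n → ℕ := Function.update c j (c j - 1) with hc₁
    have hsum : ∑ i, c₁ i = N + K := by
      have h1 : ∑ i, c₁ i = (c j - 1) + ∑ i ∈ Finset.univ \ {j}, c i :=
        Finset.sum_update_of_mem (Finset.mem_univ j) c (c j - 1)
      have h2 : c j + ∑ i ∈ Finset.univ \ {j}, c i = ∑ i, c i := by
        rw [Finset.sdiff_singleton_eq_erase]
        exact Finset.add_sum_erase _ c (Finset.mem_univ j)
      omega
    obtain ⟨c', h1, h2⟩ := ih c₁ hsum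
    refine ⟨c', fun i => (h1 i).trans ?_, h2⟩
    by_cases h : i = j
    · subst h; simp [hc₁]
    · simp [hc₁, Function.update_of_ne h]


lemma minsum {n : ℕ} (e d t : ℕ) (he1 : 1 ≤ e) (hen : e + 1 ≤ n) (hd : d = n - e + 1)
    (a : Fin n → ℕ)
    (h : ∀ σ : Finset (Fin n), σ.card = e → e * d * t ≤ ∑ i ∈ σ, a i) :
    n * t * d ≤ ∑ i, min (a i) (n * t) := by
  have hen' : e ≤ n := by omega
  have hdn : d ≤ n := by omega
  -- a minimizing e-subset
  have hne : (Finset.powersetCard e (Finset.univ : Finset (Fin n))).Nonempty := by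
    rw [Finset.powersetCard_nonempty]
    simpa using hen'
  obtain ⟨σ₀, hσ₀S, hmin⟩ := Finset.exists_min_image _ (fun σ => ∑ i ∈ σ, a i) hne
  have hσ₀card : σ₀.card = e := (Finset.mem_powersetCard.1 hσ₀S).2
  have hkey : ∀ i ∉ σ₀, ∀ j ∈ σ₀, a j ≤ a i := by
    intro i hi j hj
    have hij : i ∉ σ₀.erase j := fun h => hi (Finset.mem_of_mem_erase h)
    set σ' := insert i (σ₀.erase j) with hσ'
    have hcard : σ'.card = e := by
      rw [hσ', Finset.card_insert_of_notMem hij, Finset.card_erase_of_mem hj, hσ₀card]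
      omega
    have hmem : σ' ∈ Finset.powersetCard e Finset.univ :=
      Finset.mem_powersetCard.2 ⟨Finset.subset_univ _, hcard⟩
    have h1 := hmin σ' hmem
    have h2 : ∑ x ∈ σ', a x = a i + ∑ x ∈ σ₀.erase j, a x := Finset.sum_insert hij
    have h3 : a j + ∑ x ∈ σ₀.erase j, a x = ∑ x ∈ σ₀, a x := Finset.add_sum_erase _ a hj
    omega
  have hσ₀sum : e * d * t ≤ ∑ i ∈ σ₀, a i := h σ₀ hσ₀card
  have hsplit : ∑ i, min (a i) (n * t) =
      ∑ i ∈ σ₀, min (a i) (n * t) + ∑ i ∈ σ₀ᶜ, min (a i) (n * t) := by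
    rw [← Finset.sum_union disjoint_compl_right, Finset.union_compl]
  have hccard : σ₀ᶜ.card = n - e := by
    rw [Finset.card_compl, hσ₀card, Fintype.card_fin]
  by_cases hcase : ∀ j ∈ σ₀, a j ≤ n * t
  · -- all small on σ₀
    have h1 : ∑ i ∈ σ₀, min (a i) (n * t) = ∑ i ∈ σ₀, a i :=
      Finset.sum_congr rfl (fun j hj => min_eq_left (hcase j hj))
    have h2 : ∀ i ∈ σ₀ᶜ, d * t ≤ min (a i) (n * t) := by
      intro i hi
      have hi' : i ∉ σ₀ := Finset.mem_compl.1 hi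
      have hai : e * d * t ≤ e * a i := by
        calc e * d * t ≤ ∑ j ∈ σ₀, a j := hσ₀sum
        _ ≤ ∑ j ∈ σ₀, a i := Finset.sum_le_sum (fun j hj => hkey i hi' j hj)
        _ = e * a i := by rw [Finset.sum_const, hσ₀card, smul_eq_mul]
      have hai' : e * (d * t) ≤ e * a i := by rw [← mul_assoc]; exact hai
      have : d * t ≤ a i := Nat.le_of_mul_le_mul_left hai' (by omega)
      exact le_min this (Nat.mul_le_mul_right t hdn)
    have h3 : (n - e) * (d * t) ≤ ∑ i ∈ σ₀ᶜ, min (a i) (n * t) := by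
      calc (n - e) * (d * t) = σ₀ᶜ.card • (d * t) := by rw [hccard, smul_eq_mul]
      _ ≤ ∑ i ∈ σ₀ᶜ, min (a i) (n * t) := Finset.card_nsmul_le_sum _ _ _ h2
    have heq : n * t * d = e * d * t + (n - e) * (d * t) := by
      obtain ⟨f, hf⟩ : ∃ f, n = e + f := ⟨n - e, by omega⟩
      subst hf
      simp only [Nat.add_sub_cancel_left]
      ring
    omega
  · -- some large entry in σ₀
    push_neg at hcase
    obtain ⟨j₀, hj₀, hj₀big⟩ := hcase
    have hj₀c : j₀ ∉ σ₀ᶜ := by simp [Finset.mem_compl, hj₀]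
    set S' := insert j₀ σ₀ᶜ with hS'
    have hScard : S'.card = d := by
      rw [hS', Finset.card_insert_of_notMem hj₀c, hccard]
      omega
    have hbig : ∀ i ∈ S', min (a i) (n * t) = n * t := by
      intro i hi
      rcases Finset.mem_insert.1 hi with rfl | hi
      · exact min_eq_right (le_of_lt hj₀big)
      · exact min_eq_right (le_trans (le_of_lt hj₀big) (hkey i (Finset.mem_compl.1 hi) j₀ hj₀))
    calc n * t * d = d * (n * t) := by ring
    _ = ∑ i ∈ S', min (a i) (n * t) := by
        rw [Finset.sum_congr rfl hbig, Finset.sum_const, hScard, smul_eq_mul]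
    _ ≤ ∑ i, min (a i) (n * t) :=
        Finset.sum_le_sum_of_subset (Finset.subset_univ _)



lemma monomial_sum_single (S : Finset (Fin n)) :
    (monomial (∑ i ∈ S, Finsupp.single i 1) 1 : MvPolynomial (Fin n) k) = ∏ i ∈ S, X i := by
  induction S using Finset.induction_on with
  | empty => simp
  | insert a s hx ih =>
    rw [Finset.sum_insert hx, Finset.prod_insert hx, ← ih, X, monomial_mul, one_mul]

lemma prodX_mem_inf (e : ℕ) (S : Finset (Fin n)) (hcard : ∀ σ : Finset (Fin n), σ.card = e → (S ∩ σ).Nonempty) :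
    (∏ i ∈ S, X i : MvPolynomial (Fin n) k) ∈
      ⨅ σ ∈ {s : Finset (Fin n) | s.card = e}, Ideal.span (X '' (σ : Set (Fin n))) := by
  simp only [Ideal.mem_iInf]
  intro σ hσ
  obtain ⟨i, hi⟩ := hcard σ hσ
  have hiS : i ∈ S := Finset.mem_of_mem_inter_left hi
  have hiσ : i ∈ σ := Finset.mem_of_mem_inter_right hi
  rw [← Finset.mul_prod_erase S X hiS]
  exact Ideal.mul_mem_right _ _ (Ideal.subset_span ⟨i, hiσ, rfl⟩)

lemma mono_mem (e d : ℕ) (hde : d + e = n + 1) :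
    ∀ (m : ℕ) (c : Fin n → ℕ), (∀ i, c i ≤ m) → (∑ i, c i = m * d) →
      (monomial (Finsupp.equivFunOnFinite.symm c) 1 : MvPolynomial (Fin n) k) ∈
        (⨅ σ ∈ {s : Finset (Fin n) | s.card = e},
          Ideal.span (X '' (σ : Set (Fin n)))) ^ m := by
  intro m
  induction m with
  | zero => intro c _ _; rw [pow_zero, Ideal.one_eq_top]; exact Submodule.mem_top
  | succ m ih =>
    intro c hle hsum
    set A : Finset (Fin n) := Finset.univ.filter (fun i => c i = m + 1) with hA
    set B : Finset (Fin n) := Finset.univ.filter (fun i => 0 < c i) with hB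
    have hAB : A ⊆ B := by
      intro i hi
      simp only [hA, Finset.mem_filter, Finset.mem_univ, true_and] at hi
      simp only [hB, Finset.mem_filter, Finset.mem_univ, true_and]
      omega
    have hAcard : A.card ≤ d := by
      have h1 : A.card * (m + 1) = ∑ i ∈ A, c i := by
        rw [Finset.sum_congr rfl (fun i hi => by
          simp only [hA, Finset.mem_filter, Finset.mem_univ, true_and] at hi; exact hi), Finset.sum_const, smul_eq_mul]
      have h2 : ∑ i ∈ A, c i ≤ ∑ i, c i :=
        Finset.sum_le_sum_of_subset (Finset.subset_univ _)
      have : A.card * (m + 1) ≤ (m + 1) * d := by omega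
      have := Nat.le_of_mul_le_mul_left (by linarith [this] : (m+1) * A.card ≤ (m+1) * d) (by omega : 0 < m + 1)
      exact this
    have hBcard : d ≤ B.card := by
      have h1 : ∑ i, c i = ∑ i ∈ B, c i := by
        refine (Finset.sum_subset (Finset.subset_univ _) ?_).symm
        intro i _ hi
        simp only [hB, Finset.mem_filter, Finset.mem_univ, true_and] at hi
        omega
      have h2 : ∑ i ∈ B, c i ≤ B.card * (m + 1) := by
        calc ∑ i ∈ B, c i ≤ ∑ _i ∈ B, (m + 1) := Finset.sum_le_sum (fun i _ => hle i)
        _ = B.card * (m + 1) := by rw [Finset.sum_const, smul_eq_mul]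
      have : (m + 1) * d ≤ (m + 1) * B.card := by
        calc (m+1) * d = ∑ i, c i := hsum.symm
        _ ≤ B.card * (m+1) := by omega
        _ = (m+1) * B.card := Nat.mul_comm _ _
      exact Nat.le_of_mul_le_mul_left this (by omega)
    obtain ⟨S, hAS, hSB, hScard⟩ := Finset.exists_subsuperset_card_eq hAB hAcard hBcard
    set c' : Fin n → ℕ := fun i => c i - (if i ∈ S then 1 else 0) with hc'
    have hSge1 : ∀ i ∈ S, 1 ≤ c i := by
      intro i hi
      have := hSB hi
      simp only [hB, Finset.mem_filter, Finset.mem_univ, true_and] at this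
      omega
    have hc'le : ∀ i, c' i ≤ m := by
      intro i
      by_cases h : i ∈ S
      · simp only [hc', if_pos h]
        have := hle i
        omega
      · have hiA : i ∉ A := fun hiA => h (hAS hiA)
        simp only [hA, Finset.mem_filter, Finset.mem_univ, true_and] at hiA
        simp only [hc', if_neg h]
        have := hle i
        omega
    have hc'sum : ∑ i, c' i = m * d := by
      have hptw : ∀ i ∈ Finset.univ, c' i + (if i ∈ S then 1 else 0) = c i := by
        intro i _
        by_cases h : i ∈ S
        · simp only [hc', if_pos h]
          have := hSge1 i h
          omega
        · simp [hc', if_neg h]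
      have h1 : ∑ i, (c' i + (if i ∈ S then 1 else 0)) = ∑ i, c i := Finset.sum_congr rfl hptw
      rw [Finset.sum_add_distrib] at h1
      have h2 : ∑ i, (if i ∈ S then 1 else 0) = S.card := by
        simp [Finset.sum_ite_mem]
      rw [h2, hScard] at h1
      have : (m + 1) * d = m * d + d := by ring
      omega
    have hdecomp : Finsupp.equivFunOnFinite.symm c =
        (∑ i ∈ S, Finsupp.single i 1) + Finsupp.equivFunOnFinite.symm c' := by
      ext i
      rw [Finsupp.add_apply, Finset.sum_apply']
      simp only [Finsupp.coe_equivFunOnFinite_symm, Finsupp.single_apply]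
      rw [Finset.sum_ite_eq' S i (fun _ => 1)]
      by_cases h : i ∈ S
      · simp only [if_pos h, hc']
        have := hSge1 i h
        omega
      · simp [if_neg h, hc']
    have hmul : (monomial (Finsupp.equivFunOnFinite.symm c) 1 : MvPolynomial (Fin n) k) =
        monomial (Finsupp.equivFunOnFinite.symm c') 1 * monomial (∑ i ∈ S, Finsupp.single i 1) 1 := by
      rw [monomial_mul, one_mul, hdecomp, add_comm]
    rw [hmul, pow_succ]
    refine Ideal.mul_mem_mul (ih c' hc'le hc'sum) ?_
    rw [monomial_sum_single]
    refine prodX_mem_inf e S ?_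
    intro σ hσ
    rw [Finset.nonempty_iff_ne_empty]
    intro hempty
    have hdisj : Disjoint S σ := Finset.disjoint_iff_inter_eq_empty.2 hempty
    have := Finset.card_union_of_disjoint hdisj
    have hle' : (S ∪ σ).card ≤ n := by
      have := Finset.card_le_univ (S ∪ σ)
      simpa using this
    omega

end Aux

/-- the symbolic power `I^{(edt)} = ⋂_σ I_σ^{edt}` is contained in
`I^{nt}`, where `I = ⋂_σ I_σ` and `σ` ranges over `e`-element subsets of the
variables. -/
theorem stmt_6 (k : Type*) [Field k] (n e : ℕ) (hn : 2 ≤ n) (he1 : 1 ≤ e) (he2 : e ≤ n - 1)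
    (d : ℕ) (hd : d = n - e + 1)
    (I : Ideal (MvPolynomial (Fin n) k))
    (hI : I = ⨅ σ ∈ {s : Finset (Fin n) | s.card = e}, Ideal.span (X '' (σ : Set (Fin n))))
    (t : ℕ) (ht : 1 ≤ t) :
    (⨅ σ ∈ {s : Finset (Fin n) | s.card = e},
        (Ideal.span (X '' (σ : Set (Fin n))) : Ideal (MvPolynomial (Fin n) k)) ^ (e * d * t))
      ≤ I ^ (n * t) := by
  subst hI
  intro f hf
  have hd' : d + e = n + 1 := by omega
  have hcond : ∀ a ∈ f.support, ∀ σ : Finset (Fin n), σ.card = e →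
      e * d * t ≤ ∑ i ∈ σ, a i := by
    intro a ha σ hσ
    have h1 : f ∈ (Ideal.span (X '' (σ : Set (Fin n))) : Ideal (MvPolynomial (Fin n) k)) ^ (e * d * t) := by
      have := Ideal.mem_iInf.1 hf σ
      exact Ideal.mem_iInf.1 this hσ
    exact pow_span_le_degIdeal σ (e * d * t) h1 a ha
  rw [f.as_sum]
  refine Ideal.sum_mem _ (fun a ha => ?_)
  have hCm : (monomial a (coeff a f) : MvPolynomial (Fin n) k) = C (coeff a f) * monomial a 1 := by
    rw [C_mul_monomial, mul_one]
  rw [hCm]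
  refine Ideal.mul_mem_left _ _ ?_
  have hmin : n * t * d ≤ ∑ i, min (a i) (n * t) :=
    minsum e d t he1 (by omega) hd (fun i => a i) (hcond a ha)
  obtain ⟨c, hcle, hcsum⟩ := shrink_sum (n * t * d) (∑ i, min (a i) (n * t) - n * t * d)
    (fun i => min (a i) (n * t))
    (show ∑ i, min (a i) (n * t) = n * t * d + (∑ i, min (a i) (n * t) - n * t * d) by omega)
  have h1 : ∀ i, c i ≤ n * t := fun i => le_trans (hcle i) (min_le_right _ _)
  have h2 : ∀ i, c i ≤ a i := fun i => le_trans (hcle i) (min_le_left _ _)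
  have hmem := mono_mem (k := k) e d hd' (n * t) c h1 hcsum
  have hsplit : (monomial a 1 : MvPolynomial (Fin n) k) =
      monomial (Finsupp.equivFunOnFinite.symm c) 1 *
        monomial (a - Finsupp.equivFunOnFinite.symm c) 1 := by
    rw [monomial_mul, one_mul]
    have heq : a = Finsupp.equivFunOnFinite.symm c + (a - Finsupp.equivFunOnFinite.symm c) := by
      ext i
      rw [Finsupp.add_apply, Finsupp.tsub_apply]
      simp only [Finsupp.coe_equivFunOnFinite_symm]
      have := h2 i
      omega
    rw [← heq]
  rw [hsplit]
  exact Ideal.mul_mem_right _ _ hmem
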